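/- (Upper Comparison Lemma) Let H(n,k,g) = k + (n-k+1)·g(n) + Σ_{i=n-k+1}^{n} g(i). Let s : ℕ → ℝ satisfy s(1) = 1 and s(n+1) = (1/(n+1)) max_{1≤k≤n} H(n,k,s) for n ≥ 1. Suppose g : ℕ → ℝ and δ : ℕ → ℝ≥0 satisfy 1 ≤ g(1) + δ(1) and (1/(n+1)) max_{1≤k≤n} H(n,k,g) ≤ g(n+1) + δ(n+1) for all n ≥ 1. Then s(n) ≤ g(n) + Σ_{i=1}^{n} δ(i) for all n ≥ 1. -/

import Mathlib

open Finset

/-- `H n k g = k + (n-k+1) g(n) + ∑_{i=n-k+1}^{n} g(i)`. -/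
noncomputable def H (g : ℕ → ℝ) (n k : ℕ) : ℝ :=
  (k : ℝ) + ((n : ℝ) - (k : ℝ) + 1) * g n + ∑ i ∈ Finset.Icc (n - k + 1) n, g i

/-- `max_{1 ≤ k ≤ n} H(n,k,g)` for `n ≥ 1`. -/
noncomputable def maxH (g : ℕ → ℝ) (n : ℕ) (hn : 1 ≤ n) : ℝ :=
  (Finset.Icc 1 n).sup' (Finset.nonempty_Icc.mpr hn) (fun k => H g n k)

/-- Upper comparison lemma. -/
theorem stmt_3 (s g : ℕ → ℝ) (δ : ℕ → ℝ) (hδ : ∀ i, 0 ≤ δ i)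
    (h1 : s 1 = 1)
    (hrec : ∀ n : ℕ, ∀ hn : 1 ≤ n, s (n + 1) = (1 / ((n : ℝ) + 1)) * maxH s n hn)
    (hg1 : 1 ≤ g 1 + δ 1)
    (hg : ∀ n : ℕ, ∀ hn : 1 ≤ n, (1 / ((n : ℝ) + 1)) * maxH g n hn ≤ g (n + 1) + δ (n + 1)) :
    ∀ n : ℕ, 1 ≤ n → s n ≤ g n + ∑ i ∈ Finset.Icc 1 n, δ i := by
  -- abbreviations
  set D : ℕ → ℝ := fun i => ∑ j ∈ Finset.Icc 1 i, δ j with hD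
  set T : ℕ → ℝ := fun i => g i + D i with hT
  have hDnonneg : ∀ i, 0 ≤ D i := fun i => Finset.sum_nonneg fun j _ => hδ j
  have hDmono : ∀ i j : ℕ, i ≤ j → D i ≤ D j := by
    intro i j hij
    apply Finset.sum_le_sum_of_subset_of_nonneg
    · exact Finset.Icc_subset_Icc_right hij
    · intro k _ _; exact hδ k
  intro n
  induction n using Nat.strong_induction_on with
  | _ n ih =>
    intro hn
    obtain ⟨m, rfl⟩ : ∃ m, n = m + 1 := ⟨n - 1, (Nat.succ_pred_eq_of_pos hn).symm⟩
    rcases Nat.eq_zero_or_pos m with rfl | hm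
    · simpa [h1] using hg1
    -- main case: n = m + 1, m ≥ 1
    have hihT : ∀ i, 1 ≤ i → i ≤ m → s i ≤ T i := by
      intro i h1i h2i
      exact ih i (by omega) h1i
    -- Step 1: pointwise H s m k ≤ H T m k for k ∈ Icc 1 m
    have step1 : maxH s m hm ≤ maxH T m hm := by
      apply Finset.sup'_mono_fun
      intro k hk
      rw [Finset.mem_Icc] at hk
      unfold H
      have hcoef : (0:ℝ) ≤ (m : ℝ) - (k : ℝ) + 1 := by
        have : (k:ℝ) ≤ m := by exact_mod_cast hk.2
        linarith
      have h1' : s m ≤ T m := hihT m hm le_rfl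
      have h2' : ∑ i ∈ Finset.Icc (m - k + 1) m, s i ≤ ∑ i ∈ Finset.Icc (m - k + 1) m, T i := by
        apply Finset.sum_le_sum
        intro i hi
        rw [Finset.mem_Icc] at hi
        exact hihT i (by omega) hi.2
      have := mul_le_mul_of_nonneg_left h1' hcoef
      linarith
    -- Step 2: for each k, H T m k ≤ H g m k + (m+1) * D m
    have step2 : maxH T m hm ≤ maxH g m hm + ((m:ℝ) + 1) * D m := by
      apply Finset.sup'_le
      intro k hk
      rw [Finset.mem_Icc] at hk
      have hkm : k ≤ m := hk.2
      have hcard : (Finset.Icc (m - k + 1) m).card = k := by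
        rw [Nat.card_Icc]; omega
      have hHT : H T m k = H g m k + ((m:ℝ) - k + 1) * D m
          + ∑ i ∈ Finset.Icc (m - k + 1) m, D i := by
        unfold H
        simp only [hT]
        rw [Finset.sum_add_distrib]
        ring
      have hsumD : ∑ i ∈ Finset.Icc (m - k + 1) m, D i ≤ (k : ℝ) * D m := by
        calc ∑ i ∈ Finset.Icc (m - k + 1) m, D i
            ≤ ∑ i ∈ Finset.Icc (m - k + 1) m, D m :=
              Finset.sum_le_sum fun i hi => hDmono i m (Finset.mem_Icc.mp hi).2
          _ = (k : ℝ) * D m := by rw [Finset.sum_const, hcard]; push_cast; ring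
      have hle : H g m k ≤ maxH g m hm :=
        Finset.le_sup' (fun k => H g m k) (Finset.mem_Icc.mpr hk)
      rw [hHT]
      have : ((m:ℝ) - k + 1) * D m + (k:ℝ) * D m = ((m:ℝ) + 1) * D m := by ring
      linarith
    -- combine
    have hpos : (0:ℝ) < (m:ℝ) + 1 := by positivity
    have hfrac : (0:ℝ) ≤ 1 / ((m:ℝ) + 1) := by positivity
    have key : s (m + 1) ≤ (1 / ((m:ℝ) + 1)) * maxH g m hm + D m := by
      rw [hrec m hm]
      have h12 : maxH s m hm ≤ maxH g m hm + ((m:ℝ) + 1) * D m := le_trans step1 step2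
      have := mul_le_mul_of_nonneg_left h12 hfrac
      calc (1 / ((m:ℝ) + 1)) * maxH s m hm
          ≤ (1 / ((m:ℝ) + 1)) * (maxH g m hm + ((m:ℝ) + 1) * D m) := this
        _ = (1 / ((m:ℝ) + 1)) * maxH g m hm + D m := by field_simp
    have hsum : ∑ i ∈ Finset.Icc 1 (m + 1), δ i = D m + δ (m + 1) := by
      rw [hD]
      rw [Finset.sum_Icc_succ_top (by omega : 1 ≤ m + 1)]
    rw [hsum]
    have := hg m hm
    linarith
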